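/- With α_v and d as in Pöschel's example in one dimension (d_i = Σ_{v=1}^∞ α_v(i) 2^{−v}, where α_v is the period-2^v characteristic function of A_v), the sequence d satisfies the distality bound: for every nonzero integer k, inf_{i∈ℤ} |d_i − d_{i+k}| ≥ (16|k|)^{−1}. -/

import Mathlib

open Finset

namespace S15



def B (j : ℕ) (i : ℤ) : ℤ := i / 2 ^ j % 2

lemma two_pow_pos (j : ℕ) : (0:ℤ) < 2 ^ j := by positivity

lemma B01 (j : ℕ) (i : ℤ) : B j i = 0 ∨ B j i = 1 :=
  Int.emod_two_eq_zero_or_one _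

lemma B_add_mul (j : ℕ) (i t : ℤ) : B j (i + 2 ^ (j+1) * t) = B j i := by
  unfold B
  have h : i + 2^(j+1)*t = i + (2*t) * 2^j := by ring
  rw [h, Int.add_mul_ediv_right _ _ (two_pow_pos j).ne', Int.add_mul_emod_self_left]

lemma B_flip (s : ℕ) (i m : ℤ) (hm : m % 2 = 1) : B s (i + 2 ^ s * m) = 1 - B s i := by
  unfold B
  rw [mul_comm ((2:ℤ)^s) m, Int.add_mul_ediv_right _ _ (two_pow_pos s).ne']
  omega

lemma ediv_two_pow_succ (m : ℕ) (x : ℤ) : x / 2 ^ (m+1) = x / 2 ^ m / 2 := by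
  have hp : (0:ℤ) < 2^(m+1) := two_pow_pos _
  have h2 : (0:ℤ) ≤ x % 2^m := Int.emod_nonneg _ (two_pow_pos m).ne'
  have h3 : x % 2^m < 2^m := Int.emod_lt_of_pos _ (two_pow_pos m)
  have h4 := Int.emod_add_mul_ediv x (2^m)
  have h5 := Int.emod_add_mul_ediv (x / 2^m) 2
  have hq : x / 2^m % 2 = 0 ∨ x / 2^m % 2 = 1 := Int.emod_two_eq_zero_or_one _
  refine ((Int.ediv_emod_unique (r := 2^m * (x / 2^m % 2) + x % 2^m) hp).mpr ⟨?_, ?_, ?_⟩).1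
  · linear_combination h4 + (2:ℤ)^m * h5
  · rcases hq with h | h <;> rw [h] <;> linarith
  · rw [pow_succ]; rcases hq with h | h <;> rw [h] <;> linarith

lemma emod_two_pow_succ (m : ℕ) (x : ℤ) :
    x % 2 ^ (m + 1) = x % 2 ^ m + 2 ^ m * B m x := by
  have h1 := ediv_two_pow_succ m x
  have h2 : (2:ℤ) * (x / 2^m / 2) = x / 2^m - (x / 2^m) % 2 := by omega
  have h3 : (2:ℤ)^m * (x / 2^m) = x - x % 2^m := by
    have := Int.emod_add_mul_ediv x (2^m); linarith
  rw [Int.emod_def, h1, pow_succ]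
  unfold B
  calc x - 2^m * 2 * (x / 2^m / 2) = x - 2^m * (2 * (x / 2^m / 2)) := by ring
    _ = x - 2^m * (x / 2^m - (x / 2^m) % 2) := by rw [h2]
    _ = x - 2^m * (x / 2^m) + 2^m * ((x / 2^m) % 2) := by ring
    _ = x % 2^m + 2^m * (x / 2^m % 2) := by rw [h3]; ring

lemma emod_eq_sum_bits (m : ℕ) (x : ℤ) :
    x % 2 ^ m = ∑ j ∈ range m, 2 ^ j * B j x := by
  induction m with
  | zero => simp
  | succ m ih => rw [emod_two_pow_succ, ih, sum_range_succ]

lemma emod_lt_iff (j : ℕ) (i : ℤ) : i % 2 ^ (j+1) < 2 ^ j ↔ B j i = 0 := by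
  have h := emod_two_pow_succ j i
  have h1 : 0 ≤ i % 2^j := Int.emod_nonneg _ (two_pow_pos j).ne'
  have h2 : i % 2^j < 2^j := Int.emod_lt_of_pos _ (two_pow_pos j)
  rcases B01 j i with h3 | h3 <;> rw [h3] at h <;> rw [h3] <;> constructor <;> intro hh <;>
    first
      | rfl
      | linarith
      | (exfalso; linarith)






noncomputable def gam (j : ℕ) (i : ℤ) : ℝ := if B j i = 1 - (j : ℤ) % 2 then 1 else 0

lemma gam_nonneg (j : ℕ) (i : ℤ) : 0 ≤ gam j i := by unfold gam; split <;> norm_num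
lemma gam_le_one (j : ℕ) (i : ℤ) : gam j i ≤ 1 := by unfold gam; split <;> norm_num

lemma jmod01 (j : ℕ) : (j:ℤ) % 2 = 0 ∨ (j:ℤ) % 2 = 1 := Int.emod_two_eq_zero_or_one _

lemma alpha_eq (α : ℕ → ℤ → ℝ)
    (hα : ∀ v : ℕ, 1 ≤ v → ∀ i : ℤ,
      α v i = if (Even v ↔ i % (2 ^ v : ℤ) < (2 ^ (v - 1) : ℤ)) then 1 else 0)
    (j : ℕ) (i : ℤ) : α (j + 1) i = gam j i := by
  rw [hα (j+1) (by omega) i]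
  unfold gam
  have h0 : j + 1 - 1 = j := rfl
  have hj : Even (j+1) ↔ (j:ℤ) % 2 = 1 := by
    rw [Nat.even_add_one, ← Int.even_coe_nat, Int.even_iff]
    omega
  have key : (Even (j+1) ↔ i % (2:ℤ)^(j+1) < (2:ℤ)^(j+1-1)) ↔ (B j i = 1 - (j:ℤ) % 2) := by
    rw [h0, emod_lt_iff, hj]
    rcases B01 j i with h | h <;> rcases jmod01 j with h' | h' <;>
      rw [h, h'] <;> norm_num
  simp only [key]

lemma summable_pow (c : ℕ) : Summable (fun j : ℕ => (2:ℝ)⁻¹ ^ (j + c)) := by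
  have : (fun j : ℕ => (2:ℝ)⁻¹ ^ (j + c)) = fun j : ℕ => (2:ℝ)⁻¹ ^ j * (2:ℝ)⁻¹ ^ c := by
    funext j; rw [pow_add]
  rw [this]
  exact (summable_geometric_of_lt_one (by norm_num) (by norm_num)).mul_right _

lemma summable_gam (i : ℤ) (c : ℕ) :
    Summable (fun j : ℕ => gam (j + c) i * (2:ℝ)⁻¹ ^ (j + c + 1)) := by
  apply Summable.of_nonneg_of_le
    (fun j => mul_nonneg (gam_nonneg _ _) (by positivity)) (fun j => ?_)
    (summable_pow (c+1))
  have h2 : (2:ℝ)⁻¹ ^ (j + (c + 1)) = (2:ℝ)⁻¹ ^ (j + c + 1) := by congr 1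
  rw [h2]
  calc gam (j+c) i * (2:ℝ)⁻¹ ^ (j+c+1) ≤ 1 * (2:ℝ)⁻¹ ^ (j+c+1) :=
      mul_le_mul_of_nonneg_right (gam_le_one _ _) (by positivity)
    _ = (2:ℝ)⁻¹ ^ (j+c+1) := one_mul _

lemma tsum_pow (c : ℕ) : ∑' j : ℕ, (2:ℝ)⁻¹ ^ (j + c + 1) = (2:ℝ)⁻¹ ^ c := by
  have h1 : ∀ j : ℕ, (2:ℝ)⁻¹ ^ (j + c + 1) = (2:ℝ)⁻¹ ^ j * (2:ℝ)⁻¹ ^ (c+1) := by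
    intro j; rw [← pow_add]; congr 1
  rw [tsum_congr h1, tsum_mul_right, tsum_geometric_of_lt_one (by norm_num) (by norm_num)]
  rw [pow_succ]
  norm_num
  ring

lemma tail_nonneg (i : ℤ) (N : ℕ) : 0 ≤ ∑' j : ℕ, gam (j + N) i * (2:ℝ)⁻¹ ^ (j + N + 1) :=
  tsum_nonneg (fun j => mul_nonneg (gam_nonneg _ _) (by positivity))

lemma tail_le (i : ℤ) (N : ℕ) :
    ∑' j : ℕ, gam (j + N) i * (2:ℝ)⁻¹ ^ (j + N + 1) ≤ (2:ℝ)⁻¹ ^ N := by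
  rw [← tsum_pow N]
  apply Summable.tsum_le_tsum _ (summable_gam i N) (by simpa [add_assoc] using summable_pow (N+1))
  intro j
  calc gam (j+N) i * (2:ℝ)⁻¹ ^ (j+N+1) ≤ 1 * (2:ℝ)⁻¹ ^ (j+N+1) :=
      mul_le_mul_of_nonneg_right (gam_le_one _ _) (by positivity)
    _ = (2:ℝ)⁻¹ ^ (j+N+1) := one_mul _

lemma d_split (i : ℤ) (N : ℕ) :
    ∑' j : ℕ, gam j i * (2:ℝ)⁻¹ ^ (j + 1)
      = (∑ j ∈ range N, gam j i * (2:ℝ)⁻¹ ^ (j + 1))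
        + ∑' j : ℕ, gam (j + N) i * (2:ℝ)⁻¹ ^ (j + N + 1) :=
  (Summable.sum_add_tsum_nat_add N
    (by simpa using summable_gam i 0 : Summable (fun j : ℕ => gam j i * (2:ℝ)⁻¹ ^ (j+1)))).symm

lemma geo_fin (N : ℕ) : ∑ j ∈ range N, ((2:ℝ)⁻¹) ^ (j + 1) = 1 - (2:ℝ)⁻¹ ^ N := by
  induction N with
  | zero => simp
  | succ N ih => rw [sum_range_succ, ih, pow_succ]; ring

lemma int_neg_two_geom (n : ℕ) : (3:ℤ) * ∑ j ∈ range n, (-2)^j = 1 - (-2)^n := by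
  induction n with
  | zero => simp
  | succ n ih => rw [sum_range_succ, mul_add, ih, pow_succ]; ring


lemma neg_two_pow_eq (j : ℕ) : (2:ℤ)^j * (1 - 2 * ((j:ℤ) % 2)) = (-2)^j := by
  rcases Nat.even_or_odd j with h | h
  · rw [Int.even_iff.mp ((Int.even_coe_nat j).mpr h), h.neg_pow]
    ring
  · rw [Int.odd_iff.mp ((Int.odd_coe_nat j).mpr h), h.neg_pow]
    ring

lemma abs_pow_neg_two (t : ℕ) : |(-2:ℤ)^t| = 2^t := by
  rw [abs_pow]
  norm_num

lemma no_opposite (k : ℤ) (s n : ℕ) (m : ℤ) (hkm : k = 2^s * m) (hm : m % 2 = 1)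
    (h1 : (2:ℤ)^n ≤ |k|) (h2 : |k| < 2^(n+1)) (hsn : s ≤ n) (i : ℤ)
    (hall : ∀ j : ℕ, s+1 ≤ j → j ≤ n+3 → B j i = (j:ℤ)%2 ∧ B j (i+k) = 1 - (j:ℤ)%2) :
    False := by
  have hlow : ∀ j ∈ range s, 2^j * (B j (i+k) - B j i) = 0 := by
    intro j hj
    rw [mem_range] at hj
    have hk2 : i + k = i + 2^(j+1) * (2^(s-(j+1)) * m) := by
      rw [hkm, ← mul_assoc, ← pow_add]
      congr 3
      omega
    rw [hk2, B_add_mul]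
    ring
  have hflip : B s (i+k) = 1 - B s i := by rw [hkm]; exact B_flip s i m hm
  have emid : ∀ j ∈ Ico (s+1) (n+4), 2^j * (B j (i+k) - B j i) = (-2:ℤ)^j := by
    intro j hj
    rw [mem_Ico] at hj
    obtain ⟨hb1, hb2⟩ := hall j hj.1 (by omega)
    rw [hb1, hb2, ← neg_two_pow_eq]
    ring
  set D : ℤ := (i+k) % 2^(n+4) - i % 2^(n+4) with hDdef
  set A : ℤ := ∑ j ∈ Ico (s+1) (n+4), (-2:ℤ)^j with hA
  have hD : D = 2^s * (B s (i+k) - B s i) + A := by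
    rw [hDdef, emod_eq_sum_bits, emod_eq_sum_bits, ← Finset.sum_sub_distrib]
    calc ∑ j ∈ range (n+4), (2^j * B j (i+k) - 2^j * B j i)
        = ∑ j ∈ range (n+4), 2^j * (B j (i+k) - B j i) :=
          sum_congr rfl (fun j _ => by ring)
      _ = ∑ j ∈ range (s+1), 2^j * (B j (i+k) - B j i)
          + ∑ j ∈ Ico (s+1) (n+4), 2^j * (B j (i+k) - B j i) := by
          rw [range_eq_Ico, range_eq_Ico]
          exact (sum_Ico_consecutive (M := ℤ) _ (Nat.zero_le (s+1)) (by omega : s+1 ≤ n+4)).symm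
      _ = 2^s * (B s (i+k) - B s i) + A := by
          rw [sum_range_succ, Finset.sum_eq_zero hlow, zero_add, hA,
            sum_congr rfl emid]
  have h3A : 3 * A = (-2:ℤ)^(s+1) - (-2:ℤ)^(n+4) := by
    rw [hA, sum_Ico_eq_sub _ (by omega : s+1 ≤ n+4), mul_sub, int_neg_two_geom, int_neg_two_geom]
    ring
  have aA1 : (2:ℤ)^(n+4) - 2^(s+1) ≤ |3*A| := by
    have t := abs_sub_abs_le_abs_sub ((-2:ℤ)^(n+4)) ((-2:ℤ)^(s+1))
    rw [abs_pow_neg_two, abs_pow_neg_two] at t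
    rw [h3A, abs_sub_comm]
    exact t
  have aA2 : |3*A| ≤ (2:ℤ)^(n+4) + 2^(s+1) := by
    rw [h3A]
    calc |(-2:ℤ)^(s+1) - (-2:ℤ)^(n+4)| ≤ |(-2:ℤ)^(s+1)| + |(-2:ℤ)^(n+4)| := abs_sub _ _
      _ = 2^(s+1) + 2^(n+4) := by rw [abs_pow_neg_two, abs_pow_neg_two]
      _ = 2^(n+4) + 2^(s+1) := by ring
  have heps : |B s (i+k) - B s i| = 1 := by
    rcases B01 s i with h | h <;> rw [hflip, h] <;> norm_num
  have t1 : |(3:ℤ)*(2^s * (B s (i+k) - B s i))| = 3*2^s := by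
    rw [abs_mul, abs_mul, heps]
    rw [abs_of_nonneg (le_of_lt (two_pow_pos s))]
    norm_num
  have t2 : |(3:ℤ)*k| = 3*|k| := by rw [abs_mul]; norm_num
  have e3 : 3*A = (3*D - 3*k) - (3*(2^s * (B s (i+k) - B s i)) - 3*k) := by
    rw [hD]; ring
  have tb : |(3:ℤ)*(2^s * (B s (i+k) - B s i)) - 3*k| ≤ 3*2^s + 3*|k| := by
    calc |(3:ℤ)*(2^s * (B s (i+k) - B s i)) - 3*k|
        ≤ |(3:ℤ)*(2^s * (B s (i+k) - B s i))| + |3*k| := abs_sub _ _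
      _ = 3*2^s + 3*|k| := by rw [t1, t2]
  have aw1 : |3*A| ≤ |3*D - 3*k| + (3*2^s + 3*|k|) := by
    rw [e3]
    calc |(3*D - 3*k) - (3*(2^s * (B s (i+k) - B s i)) - 3*k)|
        ≤ |3*D - 3*k| + |3*(2^s * (B s (i+k) - B s i)) - 3*k| := abs_sub _ _
      _ ≤ |3*D - 3*k| + (3*2^s + 3*|k|) := by linarith
  have aw2 : |3*D - 3*k| ≤ |3*A| + (3*2^s + 3*|k|) := by
    have e4 : 3*D - 3*k = 3*A + (3*(2^s * (B s (i+k) - B s i)) - 3*k) := by rw [hD]; ring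
    rw [e4]
    calc |3*A + (3*(2^s * (B s (i+k) - B s i)) - 3*k)|
        ≤ |3*A| + |3*(2^s * (B s (i+k) - B s i)) - 3*k| := abs_add_le _ _
      _ ≤ |3*A| + (3*2^s + 3*|k|) := by linarith
  have habs3 : |3*D - 3*k| = 3*|D - k| := by
    rw [show 3*D - 3*k = 3*(D-k) from by ring, abs_mul]
    norm_num
  -- numeric facts
  have hp1 : (2:ℤ)^s ≤ 2^n := pow_le_pow_right₀ (by norm_num) hsn
  have hp2 : (2:ℤ)^(s+1) ≤ 2^(n+1) := pow_le_pow_right₀ (by norm_num) (by omega)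
  have hp3 : (2:ℤ)^(n+4) = 16 * 2^n := by rw [pow_add]; ring
  have hp4 : (2:ℤ)^(n+1) = 2 * 2^n := by rw [pow_add]; ring
  have hpn := two_pow_pos n
  -- D - k ≠ 0
  have hne : D - k ≠ 0 := by
    intro h0
    rw [habs3, h0, abs_zero] at aw1
    linarith
  have hdvd : (2:ℤ)^(n+4) ∣ (D - k) := by
    refine ⟨i / 2^(n+4) - (i+k) / 2^(n+4), ?_⟩
    rw [hDdef, Int.emod_def, Int.emod_def]
    ring
  have hfin : (2:ℤ)^(n+4) ≤ |D - k| :=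
    Int.le_of_dvd (abs_pos.mpr hne) ((dvd_abs _ _).mpr hdvd)
  linarith


lemma onesided (d : ℤ → ℝ) (hd : ∀ i : ℤ, d i = ∑' j : ℕ, gam j i * (2:ℝ)⁻¹ ^ (j+1))
    (k : ℤ) (s n : ℕ) (m : ℤ) (hkm : k = 2^s * m) (hm : m % 2 = 1)
    (h1 : (2:ℤ)^n ≤ |k|) (h2 : |k| < 2^(n+1))
    (i : ℤ) (hBi : B s i = 1 - (s:ℤ) % 2) :
    (2:ℝ)⁻¹ ^ (n+4) ≤ d i - d (i+k) := by
  have hmne : m ≠ 0 := by omega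
  have hsabs : (2:ℤ)^s ≤ |k| := by
    rw [hkm, abs_mul, abs_pow]
    have h1m : (1:ℤ) ≤ |m| := Int.one_le_abs hmne
    have hval : |(2:ℤ)| = 2 := by norm_num
    rw [hval]
    nlinarith [pow_pos (by norm_num : (0:ℤ) < 2) s]
  have hsn : s ≤ n := by
    by_contra hc
    push_neg at hc
    have : (2:ℤ)^(n+1) ≤ 2^s := pow_le_pow_right₀ (by norm_num) hc
    linarith
  have hex : ∃ j₀ : ℕ, (s+1 ≤ j₀ ∧ j₀ ≤ n+3)
      ∧ ¬(B j₀ i = (j₀:ℤ)%2 ∧ B j₀ (i+k) = 1 - (j₀:ℤ)%2) := by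
    by_contra hc
    push_neg at hc
    exact no_opposite k s n m hkm hm h1 h2 hsn i
      (fun j hj1 hj2 => by
        have := hc j ⟨hj1, hj2⟩
        exact this)
  obtain ⟨j₀, ⟨hj₀1, hj₀2⟩, hj₀3⟩ := hex
  have hγs_i : gam s i = 1 := by unfold gam; rw [if_pos hBi]
  have hBik : B s (i+k) = (s:ℤ)%2 := by
    rw [hkm, B_flip s i m hm, hBi]; ring
  have hγs_ik : gam s (i+k) = 0 := by
    unfold gam
    rw [if_neg]
    rw [hBik]
    rcases jmod01 s with h | h <;> rw [h] <;> norm_num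
  have hγlow : ∀ j, j < s → gam j i = gam j (i+k) := by
    intro j hj
    unfold gam
    have hik : i + k = i + 2^(j+1) * (2^(s-(j+1)) * m) := by
      rw [hkm, ← mul_assoc, ← pow_add]
      congr 3
      omega
    rw [hik, B_add_mul]
  have hδj₀ : 0 ≤ gam j₀ i - gam j₀ (i+k) := by
    by_cases hB1 : B j₀ i = 1 - (j₀:ℤ)%2
    · have hgi : gam j₀ i = 1 := by unfold gam; rw [if_pos hB1]
      have := gam_le_one j₀ (i+k)
      linarith
    · have hBi0 : B j₀ i = (j₀:ℤ)%2 := by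
        rcases B01 j₀ i with h | h <;> rcases jmod01 j₀ with h' | h' <;> omega
      have hBik0 : ¬(B j₀ (i+k) = 1 - (j₀:ℤ)%2) := fun h => hj₀3 ⟨hBi0, h⟩
      have hgik : gam j₀ (i+k) = 0 := by unfold gam; rw [if_neg hBik0]
      have := gam_nonneg j₀ i
      linarith
  -- decomposition
  have hdec : d i - d (i+k)
      = (∑ j ∈ range (n+4), (gam j i - gam j (i+k)) * (2:ℝ)⁻¹^(j+1))
        + ((∑' j : ℕ, gam (j+(n+4)) i * (2:ℝ)⁻¹^(j+(n+4)+1))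
           - (∑' j : ℕ, gam (j+(n+4)) (i+k) * (2:ℝ)⁻¹^(j+(n+4)+1))) := by
    rw [hd i, hd (i+k), d_split i (n+4), d_split (i+k) (n+4)]
    have e : ∀ j ∈ range (n+4), (gam j i - gam j (i+k)) * (2:ℝ)⁻¹^(j+1)
        = gam j i * (2:ℝ)⁻¹^(j+1) - gam j (i+k) * (2:ℝ)⁻¹^(j+1) := fun j _ => by ring
    rw [sum_congr rfl e, Finset.sum_sub_distrib]
    ring
  have hP1 : ∑ j ∈ range (s+1), (gam j i - gam j (i+k)) * (2:ℝ)⁻¹^(j+1) = (2:ℝ)⁻¹^(s+1) := by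
    rw [sum_range_succ, Finset.sum_eq_zero, hγs_i, hγs_ik]
    · ring
    · intro j hj
      rw [mem_range] at hj
      rw [hγlow j hj]
      ring
  have hsplitP : ∑ j ∈ range (n+4), (gam j i - gam j (i+k)) * (2:ℝ)⁻¹^(j+1)
      = (∑ j ∈ range (s+1), (gam j i - gam j (i+k)) * (2:ℝ)⁻¹^(j+1))
        + ∑ j ∈ Ico (s+1) (n+4), (gam j i - gam j (i+k)) * (2:ℝ)⁻¹^(j+1) := by
    rw [range_eq_Ico, range_eq_Ico]
    exact (sum_Ico_consecutive (M := ℝ) _ (Nat.zero_le _) (by omega)).symm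
  have hj₀mem : j₀ ∈ Ico (s+1) (n+4) := mem_Ico.mpr ⟨hj₀1, by omega⟩
  have hgeo : ∑ j ∈ Ico (s+1) (n+4), ((2:ℝ)⁻¹)^(j+1) = (2:ℝ)⁻¹^(s+1) - (2:ℝ)⁻¹^(n+4) := by
    rw [sum_Ico_eq_sub _ (by omega : s+1 ≤ n+4), geo_fin, geo_fin]
    ring
  have hsum_erase : ∑ j ∈ (Ico (s+1) (n+4)).erase j₀, ((2:ℝ)⁻¹^(j+1))
      = ((2:ℝ)⁻¹^(s+1) - (2:ℝ)⁻¹^(n+4)) - (2:ℝ)⁻¹^(j₀+1) := by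
    rw [Finset.sum_erase_eq_sub hj₀mem, hgeo]
  have hterm : ∀ j ∈ (Ico (s+1) (n+4)).erase j₀,
      -((2:ℝ)⁻¹^(j+1)) ≤ (gam j i - gam j (i+k)) * (2:ℝ)⁻¹^(j+1) := by
    intro j _
    have hq : (0:ℝ) ≤ (2:ℝ)⁻¹^(j+1) := by positivity
    nlinarith [gam_nonneg j i, gam_le_one j (i+k)]
  have hIco : -((2:ℝ)⁻¹^(s+1) - (2:ℝ)⁻¹^(n+4)) + (2:ℝ)⁻¹^(j₀+1)
      ≤ ∑ j ∈ Ico (s+1) (n+4), (gam j i - gam j (i+k)) * (2:ℝ)⁻¹^(j+1) := by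
    have A1 : 0 ≤ (gam j₀ i - gam j₀ (i+k)) * (2:ℝ)⁻¹^(j₀+1) :=
      mul_nonneg hδj₀ (by positivity)
    have A2 : ∑ j ∈ (Ico (s+1) (n+4)).erase j₀, (-((2:ℝ)⁻¹^(j+1)))
        ≤ ∑ j ∈ (Ico (s+1) (n+4)).erase j₀, (gam j i - gam j (i+k)) * (2:ℝ)⁻¹^(j+1) :=
      Finset.sum_le_sum hterm
    have A3 : ∑ j ∈ (Ico (s+1) (n+4)).erase j₀, (-((2:ℝ)⁻¹^(j+1)))
        = -(((2:ℝ)⁻¹^(s+1) - (2:ℝ)⁻¹^(n+4)) - (2:ℝ)⁻¹^(j₀+1)) := by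
      rw [Finset.sum_neg_distrib, hsum_erase]
    have A4 : ∑ j ∈ Ico (s+1) (n+4), (gam j i - gam j (i+k)) * (2:ℝ)⁻¹^(j+1)
        = (gam j₀ i - gam j₀ (i+k)) * (2:ℝ)⁻¹^(j₀+1)
          + ∑ j ∈ (Ico (s+1) (n+4)).erase j₀, (gam j i - gam j (i+k)) * (2:ℝ)⁻¹^(j+1) :=
      (Finset.add_sum_erase _ _ hj₀mem).symm
    rw [A4]
    rw [A3] at A2
    linarith
  have hpow : (2:ℝ)⁻¹^(n+4) ≤ (2:ℝ)⁻¹^(j₀+1) :=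
    pow_le_pow_of_le_one (by norm_num) (by norm_num) (by omega)
  have ht1 := tail_nonneg i (n+4)
  have ht2 := tail_le i (n+4)
  have ht3 := tail_nonneg (i+k) (n+4)
  have ht4 := tail_le (i+k) (n+4)
  rw [hdec, hsplitP, hP1]
  linarith


end S15

open S15 in
/-- Distality of Pöschel's example: for `d_i = Σ_{v≥1} α_v(i) 2^{−v}` (with `α_v` the
`2^v`-periodic indicator of `A_v`), one has `inf_i |d_i − d_{i+k}| ≥ (16|k|)⁻¹` for `k ≠ 0`. -/
theorem stmt15 (α : ℕ → ℤ → ℝ)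
    (hα : ∀ v : ℕ, 1 ≤ v → ∀ i : ℤ,
      α v i = if (Even v ↔ i % (2 ^ v : ℤ) < (2 ^ (v - 1) : ℤ)) then 1 else 0)
    (d : ℤ → ℝ) (hd : ∀ i : ℤ, d i = ∑' v : ℕ, α (v + 1) i * (2 : ℝ)⁻¹ ^ (v + 1)) :
    ∀ k : ℤ, k ≠ 0 → ∀ i : ℤ, (16 * |(k : ℝ)|)⁻¹ ≤ |d i - d (i + k)| := by
  intro k hk i
  have hd' : ∀ i : ℤ, d i = ∑' j : ℕ, gam j i * (2:ℝ)⁻¹ ^ (j+1) := by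
    intro i
    rw [hd i]
    exact tsum_congr fun j => by rw [alpha_eq α hα j i]
  have hna : k.natAbs ≠ 0 := fun h => hk (Int.natAbs_eq_zero.mp h)
  obtain ⟨s, m0, hm0, hfac⟩ := Nat.exists_eq_two_pow_mul_odd hna
  set n := Nat.log 2 k.natAbs with hn
  have hlog1 : 2^n ≤ k.natAbs := Nat.pow_log_le_self 2 hna
  have hlog2 : k.natAbs < 2^(n+1) := Nat.lt_pow_succ_log_self (by norm_num) _
  have habs1 : (2:ℤ)^n ≤ |k| := by
    rw [Int.abs_eq_natAbs]
    exact_mod_cast hlog1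
  have habs2 : |k| < (2:ℤ)^(n+1) := by
    rw [Int.abs_eq_natAbs]
    exact_mod_cast hlog2
  -- k = 2^s * m with m odd (ℤ)
  have hfacZ : ∃ m : ℤ, k = 2^s * m ∧ m % 2 = 1 := by
    rcases Int.natAbs_eq k with he | he
    · refine ⟨(m0:ℤ), ?_, ?_⟩
      · rw [he, hfac]; push_cast; ring
      · exact Int.odd_iff.mp ((Int.odd_coe_nat m0).mpr hm0)
    · refine ⟨-(m0:ℤ), ?_, ?_⟩
      · rw [he, hfac]; push_cast; ring
      · exact Int.odd_iff.mp ((Int.odd_coe_nat m0).mpr hm0).neg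
  obtain ⟨m, hkm, hm⟩ := hfacZ
  have hbound : ((16:ℝ) * |(k:ℝ)|)⁻¹ ≤ (2:ℝ)⁻¹ ^ (n+4) := by
    have h2n : ((2:ℝ))^n ≤ |(k:ℝ)| := by
      rw [← Int.cast_abs]
      exact_mod_cast habs1
    have hb : (2:ℝ)^(n+4) ≤ 16 * |(k:ℝ)| := by
      rw [pow_add]
      nlinarith [pow_pos (by norm_num : (0:ℝ) < 2) n]
    calc ((16:ℝ)*|(k:ℝ)|)⁻¹ ≤ ((2:ℝ)^(n+4))⁻¹ := by
          apply inv_anti₀ (by positivity) hb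
      _ = (2:ℝ)⁻¹^(n+4) := (inv_pow 2 (n+4)).symm
  by_cases hB : B s i = 1 - (s:ℤ)%2
  · have h := onesided d hd' k s n m hkm hm habs1 habs2 i hB
    calc ((16:ℝ)*|(k:ℝ)|)⁻¹ ≤ (2:ℝ)⁻¹^(n+4) := hbound
      _ ≤ d i - d (i+k) := h
      _ ≤ |d i - d (i+k)| := le_abs_self _
  · have hBi : B s i = (s:ℤ)%2 := by
      rcases B01 s i with h | h <;> rcases jmod01 s with h' | h' <;> omega
    have hBik : B s (i+k) = 1 - (s:ℤ)%2 := by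
      rw [hkm, B_flip s i m hm, hBi]
    have hm' : (-m) % 2 = 1 := by omega
    have hkm' : -k = 2^s * (-m) := by rw [hkm]; ring
    have habs1' : (2:ℤ)^n ≤ |(-k)| := by rwa [abs_neg]
    have habs2' : |(-k)| < (2:ℤ)^(n+1) := by rwa [abs_neg]
    have h := onesided d hd' (-k) s n (-m) hkm' hm' habs1' habs2' (i+k) hBik
    rw [show i + k + -k = i from by ring] at h
    rw [abs_sub_comm]
    calc ((16:ℝ)*|(k:ℝ)|)⁻¹ ≤ (2:ℝ)⁻¹^(n+4) := hbound
      _ ≤ d (i+k) - d i := h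
      _ ≤ |d (i+k) - d i| := le_abs_self _
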